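/- Let A be a C*-algebra, let a, b be positive elements of A, and let δ₁, δ₂, δ₃ ≥ 0 with δ₁ ≥ δ₂ + δ₃. Then (a + b - δ₁)₊ is Cuntz subequivalent to (a - δ₂)₊ + (b - δ₃)₊. -/

import Mathlib

open Filter Topology

def CuntzBelow {A : Type*} [CStarAlgebra A] (a b : A) : Prop :=
  ∃ x : ℕ → A, Tendsto (fun n => ‖a - x n * b * star (x n)‖) atTop (𝓝 0)

/-- `(a - δ)₊`, via continuous functional calculus with `t ↦ max (t - δ) 0`. -/
noncomputable def cutoff {A : Type*} [CStarAlgebra A] (a : A) (δ : ℝ) : A :=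
  cfc (fun t : ℝ => max (t - δ) 0) a

section Lem1
variable {A : Type*} [CStarAlgebra A] [PartialOrder A] [StarOrderedRing A]

/-- Key step: for each `t > 0` there is `x` with `‖p - x q x*‖ ≤ t`. -/
lemma exists_approx_of_le (p q : A) (hp : 0 ≤ p) (hq : 0 ≤ q) (hpq : p ≤ q)
    {t : ℝ} (ht : 0 < t) : ∃ x : A, ‖p - x * q * star x‖ ≤ t := by
  have hden : ∀ u : ℝ, 0 < max u 0 + t := fun u => by positivity
  have hpsa : IsSelfAdjoint p := IsSelfAdjoint.of_nonneg hp
  have hqsa : IsSelfAdjoint q := IsSelfAdjoint.of_nonneg hq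
  -- square root of p
  set sq : ℝ → ℝ := fun u => Real.sqrt (max u 0) with hsq
  have hsq_cont : Continuous sq := Real.continuous_sqrt.comp (continuous_id.max continuous_const)
  set s : A := cfc sq p with hs
  have hss : s * s = p := by
    rw [hs, ← cfc_mul sq sq p hsq_cont.continuousOn hsq_cont.continuousOn]
    have : ∀ u ∈ spectrum ℝ p, sq u * sq u = id u := by
      intro u hu
      have hu0 : 0 ≤ u := spectrum_nonneg_of_nonneg hp hu
      simp only [hsq, id_eq]
      rw [max_eq_left hu0]
      exact Real.mul_self_sqrt hu0
    rw [cfc_congr this, cfc_id ℝ p hpsa]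
  -- resolvent-type function
  set r : ℝ → ℝ := fun u => Real.sqrt ((max u 0 + t)⁻¹) with hr
  have hr_cont : Continuous r := by
    apply Real.continuous_sqrt.comp
    exact ((continuous_id.max continuous_const).add continuous_const).inv₀
      fun u => (hden u).ne'
  set g : ℝ → ℝ := fun u => max u 0 / (max u 0 + t) with hg
  set h : ℝ → ℝ := fun u => t / (max u 0 + t) with hh
  have hg_cont : Continuous g :=
    (continuous_id.max continuous_const).div
      ((continuous_id.max continuous_const).add continuous_const) fun u => (hden u).ne'
  have hh_cont : Continuous h :=
    continuous_const.div
      ((continuous_id.max continuous_const).add continuous_const) fun u => (hden u).ne'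
  set x : A := s * cfc r q with hx
  have hsa : IsSelfAdjoint s := cfc_predicate sq p
  have hrsa : IsSelfAdjoint (cfc r q) := cfc_predicate r q
  have hxstar : star x = cfc r q * s := by rw [hx, star_mul, hsa.star_eq, hrsa.star_eq]
  -- inner computation
  have hinner : cfc r q * q * cfc r q = cfc g q := by
    have e1 : cfc (fun u => r u * id u) q = cfc r q * cfc (id : ℝ → ℝ) q :=
      cfc_mul _ _ q hr_cont.continuousOn continuous_id.continuousOn
    have e2 : cfc (fun u => (r u * id u) * r u) q
        = cfc (fun u => r u * id u) q * cfc r q :=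
      cfc_mul _ _ q (hr_cont.mul continuous_id).continuousOn hr_cont.continuousOn
    have step : cfc (fun u => (r u * id u) * r u) q = cfc g q := by
      apply cfc_congr
      intro u hu
      have hu0 : 0 ≤ u := spectrum_nonneg_of_nonneg hq hu
      have hrr : r u * r u = (max u 0 + t)⁻¹ := Real.mul_self_sqrt (by positivity)
      show r u * id u * r u = g u
      calc r u * id u * r u = r u * r u * u := by simp only [id_eq]; ring
      _ = (max u 0 + t)⁻¹ * u := by rw [hrr]
      _ = g u := by rw [hg]; rw [max_eq_left hu0]; field_simp; rw [max_eq_left hu0]; ring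
    rw [e1, cfc_id ℝ q hqsa] at e2
    rw [← e2, step]
  have hxqx : x * q * star x = s * cfc g q * s := by
    rw [hx, hxstar, ← hinner]; noncomm_ring
  -- 1 - g = h
  have hone : cfc g q + cfc h q = 1 := by
    rw [← cfc_add (a := q) g h hg_cont.continuousOn hh_cont.continuousOn]
    have : (fun u => g u + h u) = fun _ : ℝ => (1 : ℝ) := by
      funext u
      rw [hg, hh]
      field_simp
    rw [this, cfc_const_one ℝ q hqsa]
  have hdiff : p - x * q * star x = s * cfc h q * s := by
    have h1 : cfc h q = 1 - cfc g q := by rw [← hone]; noncomm_ring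
    rw [hxqx, h1, ← hss]; noncomm_ring
  -- square root of h
  set kh : ℝ → ℝ := fun u => Real.sqrt (h u) with hkh
  have hkh_cont : Continuous kh := Real.continuous_sqrt.comp hh_cont
  set k : A := cfc kh q with hk
  have hksa : IsSelfAdjoint k := cfc_predicate kh q
  have hkk : k * k = cfc h q := by
    rw [hk, ← cfc_mul _ _ q hkh_cont.continuousOn hkh_cont.continuousOn]
    apply cfc_congr
    intro u _
    exact Real.mul_self_sqrt (by rw [hh]; positivity)
  -- norm computation
  have hy : s * cfc h q * s = (s * k) * star (s * k) := by
    rw [star_mul, hsa.star_eq, hksa.star_eq, ← hkk]; noncomm_ring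
  have hnorm1 : ‖p - x * q * star x‖ = ‖k * p * k‖ := by
    rw [hdiff, hy, CStarRing.norm_self_mul_star, ← CStarRing.norm_star_mul_self,
      star_mul, hsa.star_eq, hksa.star_eq]
    congr 1
    rw [← hss]; noncomm_ring
  have hle1 : k * p * k ≤ k * q * k := hksa.conjugate_le_conjugate hpq
  have hkpk : 0 ≤ k * p * k := hksa.conjugate_nonneg hp
  have hle2 : ‖k * p * k‖ ≤ ‖k * q * k‖ :=
    CStarAlgebra.norm_le_norm_of_nonneg_of_le hkpk hle1
  have hkqk : k * q * k = cfc (fun u => kh u * id u * kh u) q := by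
    have e1 : cfc (fun u => kh u * id u) q = cfc kh q * cfc (id : ℝ → ℝ) q :=
      cfc_mul _ _ q hkh_cont.continuousOn continuous_id.continuousOn
    have e2 : cfc (fun u => (kh u * id u) * kh u) q
        = cfc (fun u => kh u * id u) q * cfc kh q :=
      cfc_mul _ _ q (hkh_cont.mul continuous_id).continuousOn hkh_cont.continuousOn
    rw [e1, cfc_id ℝ q hqsa] at e2
    rw [← hk] at e2
    exact e2.symm
  have hle3 : ‖k * q * k‖ ≤ t := by
    rw [hkqk]
    apply norm_cfc_le ht.le
    intro u hu
    have hu0 : 0 ≤ u := spectrum_nonneg_of_nonneg hq hu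
    have hkh2 : kh u * id u * kh u = t / (u + t) * u := by
      simp only [id_eq]
      have : kh u * kh u = h u := Real.mul_self_sqrt (by rw [hh]; positivity)
      calc kh u * u * kh u = kh u * kh u * u := by ring
      _ = h u * u := by rw [this]
      _ = t / (u + t) * u := by simp only [hh, max_eq_left hu0]
    rw [hkh2, Real.norm_eq_abs, abs_of_nonneg (by positivity)]
    have : t / (u + t) * u = t * (u / (u + t)) := by ring
    rw [this]
    calc t * (u / (u + t)) ≤ t * 1 := by
          apply mul_le_mul_of_nonneg_left _ ht.le
          rw [div_le_one (by positivity)]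
          linarith
    _ = t := mul_one t
  exact ⟨x, by rw [hnorm1]; exact hle2.trans hle3⟩

lemma CuntzBelow.of_le (p q : A) (hp : 0 ≤ p) (hq : 0 ≤ q) (hpq : p ≤ q) :
    CuntzBelow p q := by
  choose x hx using fun n : ℕ =>
    exists_approx_of_le p q hp hq hpq (t := 1 / (n + 1)) (by positivity)
  refine ⟨x, squeeze_zero (fun n => norm_nonneg _) hx tendsto_one_div_add_atTop_nhds_zero_nat⟩

end Lem1

section Lem2
variable {A : Type*} [CStarAlgebra A] [PartialOrder A] [StarOrderedRing A]

lemma cutoff_nonneg (a : A) (δ : ℝ) : 0 ≤ cutoff a δ :=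
  cfc_nonneg fun u _ => le_max_right _ _

lemma sub_algebraMap_eq (a : A) (δ : ℝ) (ha : IsSelfAdjoint a) :
    a - algebraMap ℝ A δ = cfc (fun u : ℝ => u - δ) a := by
  rw [cfc_sub (fun u : ℝ => u) (fun _ : ℝ => δ) a continuous_id.continuousOn
    continuous_const.continuousOn, cfc_id' ℝ a ha, cfc_const δ a ha]

lemma sub_algebraMap_le_cutoff (a : A) (δ : ℝ) (ha : 0 ≤ a) :
    a - algebraMap ℝ A δ ≤ cutoff a δ := by
  rw [sub_algebraMap_eq a δ (IsSelfAdjoint.of_nonneg ha)]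
  exact cfc_mono (fun u _ => le_max_left _ _)

/-- per-`s` approximation: if `d - δ ≤ c` (all positive) and `δ ≤ δ₁ < δ₁ + s`, then
`(d - δ₁ - s)₊`-style conjugation gives `x` with `‖cutoff d δ₁ - x c x*‖ ≤ 2s`. -/
lemma exists_approx_cutoff (d c : A) (hd : 0 ≤ d) (hc : 0 ≤ c) (δ δ₁ : ℝ)
    (hδ : δ ≤ δ₁) (key : d - algebraMap ℝ A δ ≤ c) {s : ℝ} (hs : 0 < s) :
    ∃ x : A, ‖cutoff d δ₁ - x * c * star x‖ ≤ 2 * s := by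
  have hdsa : IsSelfAdjoint d := IsSelfAdjoint.of_nonneg hd
  have hδlt : δ < δ₁ + s := by linarith
  set φ : ℝ → ℝ := fun u => max (u - (δ₁ + s)) 0 / (u - δ) with hφ
  have hφ_zero : ∀ u < δ₁ + s, φ u = 0 := by
    intro u hu
    simp only [hφ]
    rw [max_eq_right (by linarith), zero_div]
  have hφ0 : ∀ u, 0 ≤ φ u := by
    intro u
    rcases lt_or_ge u (δ₁ + s) with h | h
    · rw [hφ_zero u h]
    · exact div_nonneg (le_max_right _ _) (by linarith)
  have hφ_cont : Continuous φ := by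
    rw [continuous_iff_continuousAt]
    intro u
    by_cases hu : u = δ
    · subst hu
      have hmem : Set.Iio (δ₁ + s) ∈ 𝓝 u := isOpen_Iio.mem_nhds hδlt
      have heq : φ =ᶠ[𝓝 u] fun _ => (0 : ℝ) :=
        Filter.eventuallyEq_of_mem hmem fun v hv => hφ_zero v hv
      exact continuousAt_const.congr heq.symm
    · exact ContinuousAt.div
        (((continuous_id.sub continuous_const).max continuous_const).continuousAt)
        ((continuous_id.sub continuous_const).continuousAt)
        (sub_ne_zero.mpr hu)
  set f : ℝ → ℝ := fun u => Real.sqrt (φ u) with hf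
  have hf_cont : Continuous f := Real.continuous_sqrt.comp hφ_cont
  set w : A := cfc f d with hwdef
  have hwsa : IsSelfAdjoint w := cfc_predicate f d
  -- the key conjugation identity
  have hkey_id : ∀ u : ℝ, f u * (u - δ) * f u = max (u - (δ₁ + s)) 0 := by
    intro u
    have hff : f u * f u = φ u := Real.mul_self_sqrt (hφ0 u)
    have : f u * (u - δ) * f u = φ u * (u - δ) := by rw [← hff]; ring
    rw [this]
    by_cases hu : u = δ
    · subst hu
      rw [hφ_zero u hδlt, zero_mul, max_eq_right (by linarith)]
    · simp only [hφ]
      rw [div_mul_cancel₀ _ (sub_ne_zero.mpr hu)]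
  have hw : w * (d - algebraMap ℝ A δ) * w = cutoff d (δ₁ + s) := by
    rw [sub_algebraMap_eq d δ hdsa]
    have e1 : cfc (fun u => f u * (u - δ)) d = cfc f d * cfc (fun u : ℝ => u - δ) d :=
      cfc_mul _ _ d hf_cont.continuousOn (continuous_id.sub continuous_const).continuousOn
    have e2 : cfc (fun u => (f u * (u - δ)) * f u) d
        = cfc (fun u => f u * (u - δ)) d * cfc f d :=
      cfc_mul _ _ d (hf_cont.mul (continuous_id.sub continuous_const)).continuousOn
        hf_cont.continuousOn
    rw [e1] at e2
    rw [hwdef, ← e2]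
    exact cfc_congr fun u _ => hkey_id u
  have hle : cutoff d (δ₁ + s) ≤ w * c * w := by
    rw [← hw]
    exact hwsa.conjugate_le_conjugate key
  obtain ⟨z, hz⟩ := exists_approx_of_le (cutoff d (δ₁ + s)) (w * c * w)
    (cutoff_nonneg d _) (hwsa.conjugate_nonneg hc) hle hs
  have hclose : ‖cutoff d δ₁ - cutoff d (δ₁ + s)‖ ≤ s := by
    have : cutoff d δ₁ - cutoff d (δ₁ + s)
        = cfc (fun u : ℝ => max (u - δ₁) 0 - max (u - (δ₁ + s)) 0) d := by
      rw [cutoff, cutoff, ← cfc_sub (fun u : ℝ => max (u - δ₁) 0)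
        (fun u : ℝ => max (u - (δ₁ + s)) 0) d
        (Continuous.continuousOn (by fun_prop)) (Continuous.continuousOn (by fun_prop))]
    rw [this]
    apply norm_cfc_le hs.le
    intro u _
    rw [Real.norm_eq_abs]
    calc |max (u - δ₁) 0 - max (u - (δ₁ + s)) 0| ≤ |(u - δ₁) - (u - (δ₁ + s))| :=
          abs_max_sub_max_le_abs _ _ _
    _ = s := by rw [show (u - δ₁) - (u - (δ₁ + s)) = s by ring, abs_of_pos hs]
  refine ⟨z * w, ?_⟩
  have hx : z * w * c * star (z * w) = z * (w * c * w) * star z := by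
    rw [star_mul, hwsa.star_eq]
    noncomm_ring
  rw [hx]
  calc ‖cutoff d δ₁ - z * (w * c * w) * star z‖
      ≤ ‖cutoff d δ₁ - cutoff d (δ₁ + s)‖
        + ‖cutoff d (δ₁ + s) - z * (w * c * w) * star z‖ := by
        simpa [dist_eq_norm] using dist_triangle (cutoff d δ₁) (cutoff d (δ₁ + s))
          (z * (w * c * w) * star z)
  _ ≤ s + s := add_le_add hclose hz
  _ = 2 * s := by ring

end Lem2

theorem stmt_1 {A : Type*} [CStarAlgebra A] [PartialOrder A] [StarOrderedRing A] (a b : A) (ha : 0 ≤ a) (hb : 0 ≤ b)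
    (δ₁ δ₂ δ₃ : ℝ) (h2 : 0 ≤ δ₂) (h3 : 0 ≤ δ₃) (h1 : δ₂ + δ₃ ≤ δ₁) :
    CuntzBelow (cutoff (a + b) δ₁) (cutoff a δ₂ + cutoff b δ₃) := by
  have hd : 0 ≤ a + b := add_nonneg ha hb
  set c := cutoff a δ₂ + cutoff b δ₃ with hcdef
  have hc : 0 ≤ c := add_nonneg (cutoff_nonneg a δ₂) (cutoff_nonneg b δ₃)
  have key : (a + b) - algebraMap ℝ A (δ₂ + δ₃) ≤ c := by
    have h2' := sub_algebraMap_le_cutoff a δ₂ ha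
    have h3' := sub_algebraMap_le_cutoff b δ₃ hb
    have heq : (a + b) - algebraMap ℝ A (δ₂ + δ₃)
        = (a - algebraMap ℝ A δ₂) + (b - algebraMap ℝ A δ₃) := by
      rw [map_add]; abel
    rw [heq, hcdef]
    exact add_le_add h2' h3'
  have main : ∀ n : ℕ, ∃ x : A,
      ‖cutoff (a + b) δ₁ - x * c * star x‖ ≤ 2 * (1 / (n + 1 : ℝ)) := fun n =>
    exists_approx_cutoff (a + b) c hd hc (δ₂ + δ₃) δ₁ h1 key (by positivity)
  choose x hx using main
  refine ⟨x, squeeze_zero (fun n => norm_nonneg _) hx ?_⟩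
  simpa using tendsto_one_div_add_atTop_nhds_zero_nat.const_mul (2 : ℝ)
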